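/- Let n ≥ 2 and let F be an (n, 2n−3, 2n−3) F-sequence. Then F_{i,i−2} ≤ F_{i,i−1} for all 2 ≤ i ≤ 2n−3, and consequently F is an F-matrix of size 2n−2. -/
import Mathlib


/-- An **F**-matrix of size `2n-2` (for a fully heterochronous ranked tree shape with
`n` leaves), modeled as a function `ℤ → ℤ → ℤ` of nonnegative integer entries that
vanishes outside the index range `0 ≤ j ≤ i ≤ 2n-3`. -/
structure IsFMatrix (n : ℕ) (F : ℤ → ℤ → ℤ) : Prop where
  nonneg : ∀ i j : ℤ, 0 ≤ F i j
  zero_outside : ∀ i j : ℤ, j < 0 ∨ i < j ∨ 2 * (n : ℤ) - 3 < i → F i j = 0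
  row_mono : ∀ i j : ℤ, 1 ≤ j → j ≤ i → i ≤ 2 * (n : ℤ) - 3 → F i (j - 1) ≤ F i j
  col_lb : ∀ i j : ℤ, 0 ≤ j → j < i → i ≤ 2 * (n : ℤ) - 3 → F (i - 1) j - 1 ≤ F i j
  col_ub : ∀ i j : ℤ, 0 ≤ j → j < i → i ≤ 2 * (n : ℤ) - 3 → F i j ≤ F (i - 1) j
  diag_pos : ∀ i : ℤ, 0 ≤ i → i ≤ 2 * (n : ℤ) - 3 → 0 < F i i
  diag_first : F 0 0 = 2
  diag_step : ∀ i : ℤ, 0 < i → i < 2 * (n : ℤ) - 3 →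
      F i i = F (i - 1) (i - 1) + 1 ∨ F i i = F (i - 1) (i - 1) - 1
  diag_last : F (2 * (n : ℤ) - 3) (2 * (n : ℤ) - 3) = 1
  subdiag : ∀ i : ℤ, 1 ≤ i → i ≤ 2 * (n : ℤ) - 3 → F i (i - 1) = F (i - 1) (i - 1) - 1
  inner_lb : ∀ i j : ℤ, 2 ≤ i → i ≤ 2 * (n : ℤ) - 3 → 1 ≤ j → j ≤ i - 2 →
      F i (j - 1) + F (i - 1) j - F (i - 1) (j - 1) - 1 ≤ F i j
  inner_ub : ∀ i j : ℤ, 2 ≤ i → i ≤ 2 * (n : ℤ) - 3 → 1 ≤ j → j ≤ i - 2 →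
      F i j ≤ F i (j - 1) + F (i - 1) j - F (i - 1) (j - 1)

/-- The lower bound `L_f(i,j)` used in the F-sequence constraints. -/
def Lb (f : ℤ → ℤ → ℤ) (i j : ℤ) : ℤ :=
  max (f i (j - 1)) (max (f (i - 1) j - 1)
    (f i (j - 1) + f (i - 1) j - f (i - 1) (j - 1) - 1))

/-- The upper bound `U_f(i,j)` used in the F-sequence constraints. -/
def Ub (f : ℤ → ℤ → ℤ) (i j : ℤ) : ℤ :=
  min (f (i - 1) j) (f i (j - 1) + f (i - 1) j - f (i - 1) (j - 1))

/-- The index domain of an `(n,N,M)` F-sequence: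
`{(i,j) : 0 ≤ j ≤ i ≤ N-1} ∪ {(N,j) : 0 ≤ j ≤ M}`. -/
def ValidIdx (N M i j : ℤ) : Prop :=
  (0 ≤ j ∧ j ≤ i ∧ i ≤ N - 1) ∨ (i = N ∧ 0 ≤ j ∧ j ≤ M)

/-- An `(n,N,M)` **F**-sequence: a partially filled F-matrix, filled on the domain
`{(i,j) : 0 ≤ j ≤ i ≤ N-1} ∪ {(N,j) : 0 ≤ j ≤ M}` (and zero elsewhere). -/
structure IsFSeq (n N M : ℕ) (f : ℤ → ℤ → ℤ) : Prop where
  hMN : M ≤ N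
  hN2n : (N : ℤ) ≤ 2 * (n : ℤ) - 3
  zero_outside : ∀ i j : ℤ, ¬ ValidIdx (N : ℤ) (M : ℤ) i j → f i j = 0
  nonneg : ∀ i j : ℤ, 0 ≤ f i j
  diag_pos : ∀ i : ℤ, 0 ≤ i → i ≤ max ((N : ℤ) - 1) (M : ℤ) → 0 < f i i
  diag_first : f 0 0 = 2
  diag_step : ∀ i : ℤ, 1 ≤ i → i ≤ max ((N : ℤ) - 1) (M : ℤ) →
      f i i = f (i - 1) (i - 1) + 1 ∨ f i i = f (i - 1) (i - 1) - 1
  diag_bound : ∀ i : ℤ, 0 ≤ i → i ≤ max ((N : ℤ) - 1) (M : ℤ) →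
      f i i ≤ 2 * (n : ℤ) - i - 2
  bounds : ∀ i j : ℤ, ValidIdx (N : ℤ) (M : ℤ) i j → 0 ≤ j → j ≤ i - 2 →
      Lb f i j ≤ f i j ∧ f i j ≤ Ub f i j
  special : ∀ i j : ℤ, ValidIdx (N : ℤ) (M : ℤ) i j → 0 ≤ j → j ≤ i - 1 →
      f (i - 1) j = f (i - 1) (i - 1) → f i j = f (i - 1) (i - 1) - 1

/-- an `(n, 2n-3, 2n-3)` F-sequence satisfies
`F_{i,i-2} ≤ F_{i,i-1}` for `2 ≤ i ≤ 2n-3`, and consequently is an F-matrix of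
size `2n-2`. -/
theorem fseq_is_fmatrix (n : ℕ) (hn : 2 ≤ n) (F : ℤ → ℤ → ℤ)
    (hF : IsFSeq n (2 * n - 3) (2 * n - 3) F) :
    (∀ i : ℤ, 2 ≤ i → i ≤ 2 * (n : ℤ) - 3 → F i (i - 2) ≤ F i (i - 1)) ∧
    IsFMatrix n F := by
  obtain ⟨hMN, hN2n, hzero, hnn, hdpos, hd0, hdstep, hdbd, hbounds, hspec⟩ := hF
  have hNc : ((2 * n - 3 : ℕ) : ℤ) = 2 * (n : ℤ) - 3 := by omega
  have hmax : max (((2 * n - 3 : ℕ) : ℤ) - 1) ((2 * n - 3 : ℕ) : ℤ) = 2 * (n : ℤ) - 3 := by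
    omega
  rw [hmax] at hdpos hdstep hdbd
  have hvalid : ∀ i j : ℤ, 0 ≤ j → j ≤ i → i ≤ 2 * (n : ℤ) - 3 →
      ValidIdx ((2 * n - 3 : ℕ) : ℤ) ((2 * n - 3 : ℕ) : ℤ) i j := by
    intro i j h1 h2 h3
    unfold ValidIdx
    omega
  have hsub : ∀ i : ℤ, 1 ≤ i → i ≤ 2 * (n : ℤ) - 3 → F i (i - 1) = F (i - 1) (i - 1) - 1 := by
    intro i h1 h2
    exact hspec i (i - 1) (hvalid i (i - 1) (by omega) (by omega) h2) (by omega) (by omega) rfl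
  have hkey : ∀ i : ℤ, 2 ≤ i → i ≤ 2 * (n : ℤ) - 3 → F i (i - 2) ≤ F i (i - 1) := by
    intro i h2 h3
    have e : i - 1 - 1 = i - 2 := by ring
    have hub : F i (i - 2) ≤ F (i - 1) (i - 2) := by
      have h := (hbounds i (i - 2) (hvalid i (i - 2) (by omega) (by omega) h3)
        (by omega) (by omega)).2
      exact le_trans h (min_le_left _ _)
    have hs1 : F i (i - 1) = F (i - 1) (i - 1) - 1 := hsub i (by omega) h3
    have hs2 : F (i - 1) (i - 2) = F (i - 2) (i - 2) - 1 := by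
      have h := hsub (i - 1) (by omega) (by omega)
      rwa [e] at h
    rcases hdstep (i - 1) (by omega) (by omega) with h | h
    · rw [e] at h; linarith
    · rw [e] at h
      have heq : F (i - 1) (i - 2) = F (i - 1) (i - 1) := by rw [hs2, h]
      have hsp := hspec i (i - 2) (hvalid i (i - 2) (by omega) (by omega) h3) (by omega)
        (by omega) heq
      linarith
  refine ⟨hkey, ?_⟩
  constructor
  · exact hnn
  · intro i j h
    apply hzero
    unfold ValidIdx
    omega
  · -- row_mono
    intro i j h1 h2 h3
    have hcases : j = i ∨ j = i - 1 ∨ j ≤ i - 2 := by omega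
    rcases hcases with rfl | rfl | hle
    · have hs := hsub j (by omega) h3
      rcases hdstep j (by omega) h3 with h | h <;> rw [hs] <;> linarith
    · have e : i - 1 - 1 = i - 2 := by ring
      rw [e]
      exact hkey i (by omega) h3
    · have h := (hbounds i j (hvalid i j (by omega) (by omega) h3) (by omega) hle).1
      exact le_trans (le_max_left _ _) h
  · -- col_lb
    intro i j h1 h2 h3
    have hcases : j = i - 1 ∨ j ≤ i - 2 := by omega
    rcases hcases with rfl | hle
    · rw [hsub i (by omega) h3]
    · have h := (hbounds i j (hvalid i j (by omega) (by omega) h3) (by omega) hle).1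
      exact le_trans (le_trans (le_max_left _ _) (le_max_right _ _)) h
  · -- col_ub
    intro i j h1 h2 h3
    have hcases : j = i - 1 ∨ j ≤ i - 2 := by omega
    rcases hcases with rfl | hle
    · rw [hsub i (by omega) h3]; linarith
    · have h := (hbounds i j (hvalid i j (by omega) (by omega) h3) (by omega) hle).2
      exact le_trans h (min_le_left _ _)
  · -- diag_pos
    intro i h1 h2
    exact hdpos i h1 h2
  · exact hd0
  · intro i h1 h2
    exact hdstep i (by omega) (by omega)
  · have h1 := hdpos (2 * (n : ℤ) - 3) (by omega) (by omega)
    have h2 := hdbd (2 * (n : ℤ) - 3) (by omega) (by omega)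
    omega
  · exact hsub
  · -- inner_lb
    intro i j h1 h2 h3 h4
    have h := (hbounds i j (hvalid i j (by omega) (by omega) h2) (by omega) (by omega)).1
    exact le_trans (le_trans (le_max_right _ _) (le_max_right _ _)) h
  · -- inner_ub
    intro i j h1 h2 h3 h4
    have h := (hbounds i j (hvalid i j (by omega) (by omega) h2) (by omega) (by omega)).2
    exact le_trans h (min_le_right _ _)
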